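/- arXiv:1506.04598 — 2 statements merged into one kernel-verified Lean document; each statement's English description precedes it below -/
import Mathlib

section
/- Let 𝔄 be an excellent based A-algebra with basis {b_i : i ∈ I} and distinguished subset I₀. Then the ℤ-bilinear product on the free abelian group with basis {t_i : i ∈ I} defined by t_i t_{i'} = Σ_{j∈I} h*_{i,i',j^!} t_j is associative, and the element Σ_{i∈I₀} t_i is a unit element for this product; thus this free abelian group becomes an associative unital ring (the asymptotic ring 𝔄^∞ of 𝔄). -/
open scoped Classical
open Finset

noncomputable section

/-- The ring `A = ℤ[v,v⁻¹]` of Laurent polynomials over `ℤ`. -/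
abbrev LP : Type := LaurentPolynomial ℤ

/-- The coefficient of `v^n` in a Laurent polynomial. -/
def lcoeff (f : LP) (n : ℤ) : ℤ := (AddMonoidAlgebra.coeff f) n

/-- A based `A`-algebra (Lusztig, 1.9), encoded by its structure constants
`h i i' j` (the coefficient of `b j` in `b i * b i'`), the coordinates `e i` of the
unit element, the involution `einv` of the index set (written `i ↦ i^!`), and the
distinguished subset `I0` of `{i | i^! = i}`. -/
structure BasedAlgebra (I : Type) [Fintype I] [DecidableEq I] where
  h : I → I → I → LP
  e : I → LP
  einv : I → I
  I0 : Finset I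
  einv_invol : ∀ i, einv (einv i) = i
  mul_assoc' : ∀ i j k l, ∑ m, h i j m * h m k l = ∑ m, h j k m * h i m l
  one_mul' : ∀ j k, ∑ i, e i * h i j k = if j = k then 1 else 0
  mul_one' : ∀ j k, ∑ i, e i * h j i k = if j = k then 1 else 0
  anti' : ∀ i i' j, h (einv i) (einv i') (einv j) = h i' i j
  I0_fixed : ∀ i ∈ I0, einv i = i

namespace BasedAlgebra

variable {I : Type} [Fintype I] [DecidableEq I]

/-- The preorder `⪯_left` on `I`, generated by: `j ⪯_left i` if `h i' i j ≠ 0` for some `i'`. -/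
def leLeft (B : BasedAlgebra I) : I → I → Prop :=
  Relation.ReflTransGen (fun j i => ∃ i', B.h i' i j ≠ 0)

/-- The preorder `⪯` on `I`, generated by:
`j ⪯ i` if `h i i' j ≠ 0` or `h i' i j ≠ 0` for some `i'`. -/
def leTwo (B : BasedAlgebra I) : I → I → Prop :=
  Relation.ReflTransGen (fun j i => ∃ i', B.h i i' j ≠ 0 ∨ B.h i' i j ≠ 0)

/-- The equivalence relation `∼_left` whose classes are the left cells. -/
def simLeft (B : BasedAlgebra I) (i j : I) : Prop := B.leLeft i j ∧ B.leLeft j i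

/-- The equivalence relation `∼` whose classes are the two-sided cells. -/
def simTwo (B : BasedAlgebra I) (i j : I) : Prop := B.leTwo i j ∧ B.leTwo j i

/-- `c` is a left cell. -/
def IsLeftCell (B : BasedAlgebra I) (c : Set I) : Prop := ∃ i, c = {j | B.simLeft j i}

/-- `c` is a two-sided cell. -/
def IsTwoCell (B : BasedAlgebra I) (c : Set I) : Prop := ∃ i, c = {j | B.simTwo j i}

/-- Lusztig's `a`-function: `a j` is the smallest `m : ℕ` such that
`h i i' j ∈ v^{-m} ℤ[v]` for all `i, i'`. -/
def af (B : BasedAlgebra I) (j : I) : ℕ :=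
  sInf {m : ℕ | ∀ i i' : I, ∀ n : ℤ, n < -(m : ℤ) → lcoeff (B.h i i' j) n = 0}

/-- The leading coefficients: `h i i' (j^!) = (hstar i i' j) v^{-a(j^!)} +` higher powers. -/
def hstar (B : BasedAlgebra I) (i i' j : I) : ℤ :=
  lcoeff (B.h i i' (B.einv j)) (-(B.af (B.einv j) : ℤ))

/-- The based algebra is *excellent* if properties Q1–Q11 of Lusztig (1.9) hold. -/
structure Excellent (B : BasedAlgebra I) : Prop where
  q1 : ∀ j ∈ B.I0, ∀ i i', B.hstar i i' j ≠ 0 → i' = B.einv i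
  q2 : ∀ i, ∃! j, j ∈ B.I0 ∧ B.hstar (B.einv i) i j ≠ 0
  q3 : ∀ i' i, B.leTwo i' i → B.af i ≤ B.af i'
  q4 : ∀ j ∈ B.I0, ∀ i, B.hstar (B.einv i) i j ≠ 0 → B.hstar (B.einv i) i j = 1
  q5 : ∀ i j k, B.hstar i j k = B.hstar j k i
  q6 : ∀ i j k, B.hstar i j k ≠ 0 →
    B.simLeft i (B.einv j) ∧ B.simLeft j (B.einv k) ∧ B.simLeft k (B.einv i)
  q7 : ∀ i' i, B.leLeft i' i → B.af i' = B.af i → B.simLeft i' i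
  q8 : ∀ i' i, B.leTwo i' i → B.af i' = B.af i → B.simTwo i' i
  q9a : ∀ i, ∃! j, j ∈ B.I0 ∧ B.simLeft j i
  q9b : ∀ i j, j ∈ B.I0 → B.simLeft j i → B.hstar (B.einv i) i j = 1
  q10 : ∀ i, B.simTwo i (B.einv i)
  q11 : ∀ i i' j k, B.af j = B.af k → ∀ p q : ℤ,
    ∑ j', lcoeff (B.h k i' j') p * lcoeff (B.h i j' j) q
      = ∑ j', lcoeff (B.h i k j') q * lcoeff (B.h j' i' j) p

/-- The multiplication of the asymptotic ring `𝔄^∞`, on coordinates with respect to the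
basis `{t_i}`: `t_i t_{i'} = ∑_j h*_{i,i',j^!} t_j`. -/
def tmul (B : BasedAlgebra I) (x y : I → ℤ) : I → ℤ :=
  fun j => ∑ i, ∑ i', x i * y i' * B.hstar i i' (B.einv j)

/-- The element `∑_{i ∈ I₀} t_i` of `𝔄^∞`. -/
def tone (B : BasedAlgebra I) : I → ℤ := fun i => if i ∈ B.I0 then 1 else 0

/-- The basis element `t_i` of `𝔄^∞`. -/
def tbasis (B : BasedAlgebra I) (i : I) : I → ℤ := fun j => if j = i then 1 else 0

end BasedAlgebra

namespace BasedAlgebra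

variable {I : Type} [Fintype I] [DecidableEq I] (B : BasedAlgebra I)

lemma leTwo_of_leLeft {i j : I} (h : B.leLeft i j) : B.leTwo i j :=
  Relation.ReflTransGen.mono (r := fun j i => ∃ i', B.h i' i j ≠ 0)
    (p := fun j i => ∃ i', B.h i i' j ≠ 0 ∨ B.h i' i j ≠ 0) (fun _ _ ⟨i', hi⟩ => ⟨i', Or.inr hi⟩) i j h

lemma af_eq_of_simLeft (hB : B.Excellent) {i j : I} (h : B.simLeft i j) :
    B.af i = B.af j :=
  le_antisymm (hB.q3 j i (B.leTwo_of_leLeft h.2)) (hB.q3 i j (B.leTwo_of_leLeft h.1))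

lemma af_einv (hB : B.Excellent) (i : I) : B.af (B.einv i) = B.af i :=
  le_antisymm (hB.q3 i (B.einv i) (hB.q10 i).1) (hB.q3 (B.einv i) i (hB.q10 i).2)

lemma af_eq₁ (hB : B.Excellent) {i i' j : I} (h : B.hstar i i' (B.einv j) ≠ 0) :
    B.af i' = B.af j := by
  have := (hB.q6 _ _ _ h).2.1
  rw [B.einv_invol] at this
  exact B.af_eq_of_simLeft hB this

lemma af_eq₂ (hB : B.Excellent) {i i' j : I} (h : B.hstar i i' (B.einv j) ≠ 0) :
    B.af i = B.af j := by
  have := (hB.q6 _ _ _ h).2.2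
  have h2 := B.af_eq_of_simLeft hB this
  rw [B.af_einv hB, B.af_einv hB] at h2
  exact h2.symm

lemma hstar_eq_lcoeff (i i' j : I) :
    B.hstar i i' (B.einv j) = lcoeff (B.h i i' j) (-(B.af j : ℤ)) := by
  rw [hstar, B.einv_invol]

lemma key (hB : B.Excellent) (i i' i'' j : I) :
    ∑ m, B.hstar i i' (B.einv m) * B.hstar m i'' (B.einv j)
      = ∑ m, B.hstar i' i'' (B.einv m) * B.hstar i m (B.einv j) := by
  by_cases hca : B.af j = B.af i'
  · have h11 := hB.q11 i i'' j i' hca (-(B.af j : ℤ)) (-(B.af j : ℤ))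
    have L : ∑ m, B.hstar i i' (B.einv m) * B.hstar m i'' (B.einv j)
        = ∑ m, lcoeff (B.h i i' m) (-(B.af j : ℤ)) * lcoeff (B.h m i'' j) (-(B.af j : ℤ)) := by
      refine Finset.sum_congr rfl fun m _ => ?_
      by_cases hz : B.hstar m i'' (B.einv j) = 0
      · have hz' : lcoeff (B.h m i'' j) (-(B.af j : ℤ)) = 0 := by
          rw [← B.hstar_eq_lcoeff]; exact hz
        rw [B.hstar_eq_lcoeff m i'' j, hz', mul_zero, mul_zero]
      · have ham : B.af m = B.af j := B.af_eq₂ hB hz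
        rw [B.hstar_eq_lcoeff, B.hstar_eq_lcoeff, ham]
    have R : ∑ m, B.hstar i' i'' (B.einv m) * B.hstar i m (B.einv j)
        = ∑ m, lcoeff (B.h i' i'' m) (-(B.af j : ℤ)) * lcoeff (B.h i m j) (-(B.af j : ℤ)) := by
      refine Finset.sum_congr rfl fun m _ => ?_
      by_cases hz : B.hstar i m (B.einv j) = 0
      · rw [B.hstar_eq_lcoeff i m j] at hz
        rw [B.hstar_eq_lcoeff i m j, hz, mul_zero, mul_zero]
      · have ham : B.af m = B.af j := B.af_eq₁ hB hz
        rw [B.hstar_eq_lcoeff, B.hstar_eq_lcoeff, ham]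
    rw [L, R, ← h11]
  · have L : ∀ m : I, B.hstar i i' (B.einv m) * B.hstar m i'' (B.einv j) = 0 := by
      intro m
      by_cases h1 : B.hstar i i' (B.einv m) = 0
      · rw [h1, zero_mul]
      by_cases h2 : B.hstar m i'' (B.einv j) = 0
      · rw [h2, mul_zero]
      exact absurd ((B.af_eq₂ hB h2).symm.trans (B.af_eq₁ hB h1).symm) hca
    have R : ∀ m : I, B.hstar i' i'' (B.einv m) * B.hstar i m (B.einv j) = 0 := by
      intro m
      by_cases h1 : B.hstar i' i'' (B.einv m) = 0
      · rw [h1, zero_mul]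
      by_cases h2 : B.hstar i m (B.einv j) = 0
      · rw [h2, mul_zero]
      exact absurd ((B.af_eq₁ hB h2).symm.trans (B.af_eq₂ hB h1).symm) hca
    simp only [L, R]

lemma unitL (hB : B.Excellent) (i j : I) :
    ∑ d ∈ B.I0, B.hstar d i (B.einv j) = if i = j then 1 else 0 := by
  have cyc : ∀ d, B.hstar d i (B.einv j) = B.hstar i (B.einv j) d := fun d => hB.q5 _ _ _
  by_cases hij : i = j
  · subst hij
    simp only [cyc, if_pos rfl]
    obtain ⟨d0, ⟨hd0, hne⟩, huniq⟩ := hB.q2 (B.einv i)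
    rw [B.einv_invol] at hne huniq
    rw [Finset.sum_eq_single_of_mem d0 hd0]
    · have := hB.q4 d0 hd0 (B.einv i)
      rw [B.einv_invol] at this
      exact this hne
    · intro d hd hdne
      by_contra hc
      exact hdne (huniq d ⟨hd, hc⟩)
  · rw [if_neg hij]
    refine Finset.sum_eq_zero fun d hd => ?_
    rw [cyc]
    by_contra hc
    have := hB.q1 d hd i (B.einv j) hc
    have h2 := congrArg B.einv this
    rw [B.einv_invol, B.einv_invol] at h2
    exact hij h2.symm

lemma unitR (hB : B.Excellent) (i j : I) :
    ∑ d ∈ B.I0, B.hstar i d (B.einv j) = if i = j then 1 else 0 := by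
  have cyc : ∀ d, B.hstar i d (B.einv j) = B.hstar (B.einv j) i d := fun d =>
    (hB.q5 _ _ _).trans (hB.q5 _ _ _)
  by_cases hij : i = j
  · subst hij
    simp only [cyc, if_pos rfl]
    obtain ⟨d0, ⟨hd0, hne⟩, huniq⟩ := hB.q2 i
    rw [Finset.sum_eq_single_of_mem d0 hd0]
    · exact hB.q4 d0 hd0 i hne
    · intro d hd hdne
      by_contra hc
      exact hdne (huniq d ⟨hd, hc⟩)
  · rw [if_neg hij]
    refine Finset.sum_eq_zero fun d hd => ?_
    rw [cyc]
    by_contra hc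
    have := hB.q1 d hd (B.einv j) i hc
    exact hij (by rw [this, B.einv_invol])


set_option linter.unusedSectionVars false in
lemma sum3p (f : I → I → I → ℤ) :
    ∑ m, ∑ b, ∑ c, f m b c = ∑ b, ∑ c, ∑ m, f m b c :=
  (Finset.sum_comm).trans (Finset.sum_congr rfl fun _ _ => Finset.sum_comm)

set_option linter.unusedSectionVars false in
lemma sum4p (f : I → I → I → I → ℤ) :
    ∑ m, ∑ c, ∑ a, ∑ b, f m c a b = ∑ a, ∑ b, ∑ c, ∑ m, f m c a b :=
  (Finset.sum_comm).trans <|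
    (Finset.sum_congr rfl fun _ _ => Finset.sum_comm).trans <|
      (Finset.sum_comm).trans <|
        (Finset.sum_congr rfl fun _ _ => Finset.sum_congr rfl fun _ _ => Finset.sum_comm).trans
          (Finset.sum_congr rfl fun _ _ => Finset.sum_comm)

end BasedAlgebra

/-- Lusztig 1.9. For an excellent based `A`-algebra `𝔄`, the
`ℤ`-bilinear product on the free abelian group with basis `{t_i : i ∈ I}` given by
`t_i t_{i'} = ∑_j h*_{i,i',j^!} t_j` is associative, and `∑_{i ∈ I₀} t_i` is a
(two-sided) unit for it; thus it is an associative unital ring, the asymptotic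
ring `𝔄^∞`. -/
theorem statement0 {I : Type} [Fintype I] [DecidableEq I]
    (B : BasedAlgebra I) (hB : B.Excellent) :
    (∀ x y z : I → ℤ, B.tmul (B.tmul x y) z = B.tmul x (B.tmul y z)) ∧
    (∀ x : I → ℤ, B.tmul B.tone x = x ∧ B.tmul x B.tone = x) := by
  constructor
  · intro x y z
    funext j
    have exp1 : B.tmul (B.tmul x y) z j
        = ∑ m, ∑ c, ∑ a, ∑ b,
            x a * y b * B.hstar a b (B.einv m) * z c * B.hstar m c (B.einv j) := by
      simp only [BasedAlgebra.tmul, Finset.sum_mul, Finset.mul_sum]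
    have exp2 : B.tmul x (B.tmul y z) j
        = ∑ a, ∑ m, ∑ b, ∑ c,
            x a * (y b * z c * B.hstar b c (B.einv m)) * B.hstar a m (B.einv j) := by
      simp only [BasedAlgebra.tmul, Finset.sum_mul, Finset.mul_sum]
    rw [exp1, exp2,
      BasedAlgebra.sum4p (fun m c a b => x a * y b * B.hstar a b (B.einv m) * z c * B.hstar m c (B.einv j))]
    refine Finset.sum_congr rfl fun a _ => ?_
    rw [BasedAlgebra.sum3p (fun m b c => x a * (y b * z c * B.hstar b c (B.einv m)) * B.hstar a m (B.einv j))]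
    refine Finset.sum_congr rfl fun b _ => Finset.sum_congr rfl fun c _ => ?_
    calc ∑ m, x a * y b * B.hstar a b (B.einv m) * z c * B.hstar m c (B.einv j)
        = ∑ m, x a * y b * z c * (B.hstar a b (B.einv m) * B.hstar m c (B.einv j)) :=
          Finset.sum_congr rfl fun m _ => by ring
      _ = (x a * y b * z c) * ∑ m, B.hstar a b (B.einv m) * B.hstar m c (B.einv j) :=
          (Finset.mul_sum _ _ _).symm
      _ = (x a * y b * z c) * ∑ m, B.hstar b c (B.einv m) * B.hstar a m (B.einv j) := by
          rw [B.key hB a b c j]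
      _ = ∑ m, x a * (y b * z c * B.hstar b c (B.einv m)) * B.hstar a m (B.einv j) := by
          rw [Finset.mul_sum]
          exact Finset.sum_congr rfl fun m _ => by ring
  · intro x
    constructor
    · funext j
      show (∑ d, ∑ i', B.tone d * x i' * B.hstar d i' (B.einv j)) = x j
      rw [Finset.sum_comm]
      calc ∑ i', ∑ d, B.tone d * x i' * B.hstar d i' (B.einv j)
          = ∑ i', x i' * (if i' = j then 1 else 0) := by
            refine Finset.sum_congr rfl fun i' _ => ?_
            calc ∑ d, B.tone d * x i' * B.hstar d i' (B.einv j)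
                = ∑ d, if d ∈ B.I0 then x i' * B.hstar d i' (B.einv j) else 0 :=
                  Finset.sum_congr rfl fun d _ => by
                    simp only [BasedAlgebra.tone]; split_ifs <;> ring
              _ = ∑ d ∈ B.I0, x i' * B.hstar d i' (B.einv j) := by
                  rw [Finset.sum_ite_mem, Finset.univ_inter]
              _ = x i' * ∑ d ∈ B.I0, B.hstar d i' (B.einv j) := (Finset.mul_sum _ _ _).symm
              _ = x i' * (if i' = j then 1 else 0) := by rw [B.unitL hB]
        _ = x j := by simp
    · funext j
      show (∑ i, ∑ d, x i * B.tone d * B.hstar i d (B.einv j)) = x j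
      calc ∑ i, ∑ d, x i * B.tone d * B.hstar i d (B.einv j)
          = ∑ i, x i * (if i = j then 1 else 0) := by
            refine Finset.sum_congr rfl fun i _ => ?_
            calc ∑ d, x i * B.tone d * B.hstar i d (B.einv j)
                = ∑ d, if d ∈ B.I0 then x i * B.hstar i d (B.einv j) else 0 :=
                  Finset.sum_congr rfl fun d _ => by
                    simp only [BasedAlgebra.tone]; split_ifs <;> ring
              _ = ∑ d ∈ B.I0, x i * B.hstar i d (B.einv j) := by
                  rw [Finset.sum_ite_mem, Finset.univ_inter]
              _ = x i * ∑ d ∈ B.I0, B.hstar i d (B.einv j) := (Finset.mul_sum _ _ _).symm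
              _ = x i * (if i = j then 1 else 0) := by rw [B.unitR hB]
        _ = x j := by simp
end
end

section
/- Let k be an algebraically closed field of characteristic 0, V a finite-dimensional k-vector space, H a finite subgroup of GL(V), and K a normal subgroup of H. Let E be an irreducible K-module (over k) which is univalent, i.e. dim Hom_K(E, S^{b_E}V) = 1. Then there exists an irreducible H-module E' such that E occurs in the restriction of E' to K and b_{E'} = b_E; moreover, E' is uniquely determined up to isomorphism by these two properties, and E' is univalent, i.e. dim Hom_H(E', S^{b_{E'}}V) = 1. -/
open scoped Classical
open MvPolynomial

noncomputable section

/-- The `i`-th symmetric power `S^iV` of `V = ⊕_ι k`: the degree-`i` homogeneous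
component of the polynomial algebra `SV = k[x_j : j ∈ ι]`. -/
def SymPow (ι k : Type) [CommSemiring k] (i : ℕ) : Type :=
  ↥(homogeneousSubmodule ι k i)

instance (ι k : Type) [CommRing k] (i : ℕ) : AddCommGroup (SymPow ι k i) :=
  inferInstanceAs (AddCommGroup ↥(homogeneousSubmodule ι k i))

instance (ι k : Type) [CommRing k] (i : ℕ) : Module k (SymPow ι k i) :=
  inferInstanceAs (Module k ↥(homogeneousSubmodule ι k i))

/-- The space of `G`-equivariant `k`-linear maps `X → Y`, for families of endomorphisms
`rX`, `rY` indexed by `G`. -/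
def equivSub (k : Type) [Field k] (G : Type) {X Y : Type} [AddCommGroup X] [Module k X]
    [AddCommGroup Y] [Module k Y] (rX : G → (X →ₗ[k] X)) (rY : G → (Y →ₗ[k] Y)) :
    Submodule k (X →ₗ[k] Y) where
  carrier := {f | ∀ g, f.comp (rX g) = (rY g).comp f}
  add_mem' := by
    intro f g hf hg s
    simp only [LinearMap.add_comp, LinearMap.comp_add, hf s, hg s]
  zero_mem' := by
    intro s
    simp
  smul_mem' := by
    intro c f hf s
    simp only [LinearMap.smul_comp, LinearMap.comp_smul, hf s]

/-- `r` is a linear action of the monoid `G` on `X`. -/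
def IsAction (G : Type) [Monoid G] {k X : Type} [Field k] [AddCommGroup X] [Module k X]
    (r : G → (X →ₗ[k] X)) : Prop :=
  r 1 = LinearMap.id ∧ ∀ g g', r (g * g') = (r g).comp (r g')

/-- The linear action `r` of `G` on `X` is irreducible: `X ≠ 0` and the only invariant
subspaces are `⊥` and `⊤`. -/
def IsIrred (k : Type) [Field k] (G : Type) {X : Type} [AddCommGroup X] [Module k X]
    (r : G → (X →ₗ[k] X)) : Prop :=
  Nontrivial X ∧ ∀ p : Submodule k X, (∀ g, ∀ x ∈ p, r g x ∈ p) → p = ⊥ ∨ p = ⊤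

/-- `rho` is an action of the monoid `W` on the symmetric algebra
`SV = k[x_j : j ∈ ι]` of `V = ⊕_ι k` by algebra automorphisms. -/
def IsAlgAction (W : Type) [Monoid W] {k ι : Type} [CommSemiring k]
    (rho : W → (MvPolynomial ι k ≃ₐ[k] MvPolynomial ι k)) : Prop :=
  (∀ p, rho 1 p = p) ∧ ∀ g g' p, rho (g * g') p = rho g (rho g' p)

/-- The action of `W` on the `i`-th symmetric power `S^iV`, induced by a
degree-preserving action `rho` on the symmetric algebra. -/
def srepFun {k ι W : Type} [Field k] [Fintype ι]
    (rho : W → (MvPolynomial ι k ≃ₐ[k] MvPolynomial ι k))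
    (hdeg : ∀ (g : W) (i : ℕ) (p : MvPolynomial ι k),
      p.IsHomogeneous i → (rho g p).IsHomogeneous i)
    (i : ℕ) (g : W) :
    SymPow ι k i →ₗ[k] SymPow ι k i :=
  LinearMap.restrict (rho g).toLinearMap (p := homogeneousSubmodule ι k i)
    (q := homogeneousSubmodule ι k i) (fun x hx => by
      rw [mem_homogeneousSubmodule] at hx ⊢
      exact hdeg g i x hx)

section Helpers

variable {k : Type} [Field k]

theorem mem_equivSub {G X Y : Type} [AddCommGroup X] [Module k X] [AddCommGroup Y] [Module k Y]
    {rX : G → (X →ₗ[k] X)} {rY : G → (Y →ₗ[k] Y)} {f : X →ₗ[k] Y} :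
    f ∈ equivSub k G rX rY ↔ ∀ g, f.comp (rX g) = (rY g).comp f := Iff.rfl

theorem equivSub_apply {G X Y : Type} [AddCommGroup X] [Module k X] [AddCommGroup Y] [Module k Y]
    {rX : G → (X →ₗ[k] X)} {rY : G → (Y →ₗ[k] Y)} {f : X →ₗ[k] Y}
    (hf : f ∈ equivSub k G rX rY) (g : G) (x : X) : f (rX g x) = rY g (f x) :=
  LinearMap.congr_fun (hf g) x

section Act

variable {H : Type} [Group H] {X : Type} [AddCommGroup X] [Module k X]
  {S : H → (X →ₗ[k] X)}

theorem act_one (hS : IsAction H S) (x : X) : S 1 x = x := by rw [hS.1]; rfl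

theorem act_mul (hS : IsAction H S) (g g' : H) (x : X) : S (g * g') x = S g (S g' x) := by
  rw [hS.2]; rfl

theorem act_inv_cancel (hS : IsAction H S) (g : H) (x : X) : S g (S g⁻¹ x) = x := by
  rw [← act_mul hS, mul_inv_cancel, act_one hS]

theorem act_inv_cancel' (hS : IsAction H S) (g : H) (x : X) : S g⁻¹ (S g x) = x := by
  rw [← act_mul hS, inv_mul_cancel, act_one hS]

end Act

/-- A nonzero equivariant map out of an irreducible module is injective. -/
theorem equivariant_injective {G X Y : Type} [AddCommGroup X] [Module k X]
    [AddCommGroup Y] [Module k Y]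
    {rX : G → (X →ₗ[k] X)} {rY : G → (Y →ₗ[k] Y)} (hirr : IsIrred k G rX)
    {f : X →ₗ[k] Y} (hf : ∀ g, f.comp (rX g) = (rY g).comp f) (hf0 : f ≠ 0) :
    Function.Injective f := by
  rw [← LinearMap.ker_eq_bot]
  have hinv : ∀ g, ∀ x ∈ LinearMap.ker f, rX g x ∈ LinearMap.ker f := by
    intro g x hx
    rw [LinearMap.mem_ker] at hx ⊢
    have := LinearMap.congr_fun (hf g) x
    simp only [LinearMap.comp_apply] at this
    rw [this, hx, map_zero]
  rcases hirr.2 (LinearMap.ker f) hinv with h | h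
  · exact h
  · exact absurd (LinearMap.ker_eq_top.mp h) hf0

theorem exists_smul_of_finrank_one {W : Type} [AddCommGroup W] [Module k W]
    {P : Submodule k W} (h1 : Module.finrank k ↥P = 1) {v : W} (hv : v ∈ P) (hv0 : v ≠ 0)
    {w : W} (hw : w ∈ P) : ∃ c : k, w = c • v := by
  have hv0' : (⟨v, hv⟩ : ↥P) ≠ 0 := by
    intro h
    exact hv0 (congrArg Subtype.val h)
  obtain ⟨c, hc⟩ := (finrank_eq_one_iff_of_nonzero' (⟨v, hv⟩ : ↥P) hv0').mp h1 ⟨w, hw⟩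
  exact ⟨c, by simpa using (congrArg Subtype.val hc).symm⟩

theorem finrank_one_of_spans {W : Type} [AddCommGroup W] [Module k W]
    {P : Submodule k W} {v : W} (hv : v ∈ P) (hv0 : v ≠ 0)
    (hspan : ∀ w ∈ P, ∃ c : k, w = c • v) : Module.finrank k ↥P = 1 := by
  have : P = Submodule.span k {v} := by
    apply le_antisymm
    · intro w hw
      obtain ⟨c, rfl⟩ := hspan w hw
      exact Submodule.smul_mem _ _ (Submodule.mem_span_singleton_self v)
    · rw [Submodule.span_le, Set.singleton_subset_iff]
      exact hv
  rw [this]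
  exact finrank_span_singleton hv0

/-- Maschke-type averaged projection onto an invariant subspace. -/
theorem maschke_proj {H : Type} [Group H] [Fintype H] [CharZero k]
    {M : Type} [AddCommGroup M] [Module k M]
    {S : H → (M →ₗ[k] M)} (hS : IsAction H S)
    (W : Submodule k M) (hW : ∀ g, ∀ x ∈ W, S g x ∈ W) :
    ∃ π : M →ₗ[k] M, (∀ x, π x ∈ W) ∧ (∀ x ∈ W, π x = x) ∧
      (∀ g, π.comp (S g) = (S g).comp π) := by
  obtain ⟨W', hc⟩ := Submodule.exists_isCompl W
  set p₀ : M →ₗ[k] M := W.subtype.comp (W.projectionOnto W' hc) with hp₀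
  have hp₀W : ∀ x, p₀ x ∈ W := fun x => (W.projectionOnto W' hc x).2
  have hp₀fix : ∀ x ∈ W, p₀ x = x := by
    intro x hx
    have := Submodule.linearProjOfIsCompl_apply_left hc ⟨x, hx⟩
    simp only [hp₀, LinearMap.comp_apply, Submodule.coe_subtype]
    rw [this]
  set c : k := (Fintype.card H : k)⁻¹ with hcdef
  refine ⟨c • ∑ g : H, (S g).comp (p₀.comp (S g⁻¹)), ?_, ?_, ?_⟩
  · intro x
    simp only [LinearMap.smul_apply, LinearMap.sum_apply, LinearMap.comp_apply]
    refine Submodule.smul_mem _ _ (Submodule.sum_mem _ fun g _ => ?_)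
    exact hW g _ (hp₀W _)
  · intro x hx
    have hterm : ∀ g : H, (S g) (p₀ ((S g⁻¹) x)) = x := by
      intro g
      rw [hp₀fix _ (hW g⁻¹ x hx), act_inv_cancel hS]
    simp only [LinearMap.smul_apply, LinearMap.sum_apply, LinearMap.comp_apply, hterm]
    rw [Finset.sum_const, Finset.card_univ]
    rw [← Nat.cast_smul_eq_nsmul k, smul_smul, hcdef]
    rw [inv_mul_cancel₀ (by exact_mod_cast Fintype.card_ne_zero), one_smul]
  · intro h
    ext x
    simp only [LinearMap.comp_apply, LinearMap.smul_apply, LinearMap.sum_apply, map_smul,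
      map_sum]
    congr 1
    rw [← Equiv.sum_comp (Equiv.mulLeft h) (fun g => (S g) (p₀ ((S g⁻¹) ((S h) x))))]
    refine Finset.sum_congr rfl fun g _ => ?_
    have h1 : (S (Equiv.mulLeft h g)⁻¹) ((S h) x) = S g⁻¹ x := by
      simp only [Equiv.coe_mulLeft]
      rw [← act_mul hS]
      congr 1
      group
    have h2 : ∀ y, (S (Equiv.mulLeft h g)) y = S h (S g y) := by
      intro y
      simp only [Equiv.coe_mulLeft]
      rw [← act_mul hS]
    rw [h1, h2]

end Helpers

section SrepLemmas

variable {k ι : Type} [Field k] [Fintype ι] {H : Type} [Group H]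
  {rho : H → (MvPolynomial ι k ≃ₐ[k] MvPolynomial ι k)}

theorem srep_isAction (hact : IsAlgAction H rho)
    (hdeg : ∀ (g : H) (i : ℕ) (p : MvPolynomial ι k),
      p.IsHomogeneous i → (rho g p).IsHomogeneous i) (i : ℕ) :
    IsAction H (srepFun rho hdeg i) := by
  constructor
  · apply LinearMap.ext
    intro x
    exact Subtype.ext (hact.1 x.1)
  · intro g g'
    apply LinearMap.ext
    intro x
    exact Subtype.ext (hact.2 g g' x.1)

end SrepLemmas

set_option maxHeartbeats 1000000
/-- Lusztig 1.17(a). Let `k` be algebraically closed of characteristic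
`0`, `V = ⊕_ι k` a finite-dimensional `k`-vector space, `H` a finite subgroup of `GL(V)`
(encoded by a faithful degree-preserving action of `H` on the symmetric algebra of `V`
by algebra automorphisms), and `K` a normal subgroup of `H`. Let `E` be an irreducible
univalent `K`-module with invariant `b_E` (the least `i` with `Hom_K(E, S^iV) ≠ 0`).
Then there is an irreducible `H`-module `E'` such that `E` occurs in `E'|_K` (that is,
`Hom_K(E, E'|_K) ≠ 0`) and `b_{E'} = b_E`; moreover `E'` is uniquely determined up to
isomorphism by these two properties, and `E'` is univalent. -/
theorem statement15 {k ι H : Type} [Field k] [IsAlgClosed k] [CharZero k]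
    [Fintype ι] [Group H] [Fintype H]
    (rho : H → (MvPolynomial ι k ≃ₐ[k] MvPolynomial ι k))
    (hact : IsAlgAction H rho) (hinj : Function.Injective rho)
    (hdeg : ∀ (g : H) (i : ℕ) (p : MvPolynomial ι k),
      p.IsHomogeneous i → (rho g p).IsHomogeneous i)
    (K : Subgroup H) (hK : K.Normal)
    {E : Type} [AddCommGroup E] [Module k E] [FiniteDimensional k E]
    (rE : ↥K → (E →ₗ[k] E)) (hE : IsAction ↥K rE) (hirr : IsIrred k ↥K rE)
    (bE : ℕ)
    (hbE : IsLeast {i | equivSub k ↥K rE (fun g : ↥K => srepFun rho hdeg i (g : H)) ≠ ⊥} bE)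
    (huni : Module.finrank k
      ↥(equivSub k ↥K rE (fun g : ↥K => srepFun rho hdeg bE (g : H))) = 1) :
    ∃ (n : ℕ) (rE' : H → ((Fin n → k) →ₗ[k] (Fin n → k))),
      IsAction H rE' ∧ IsIrred k H rE' ∧
      equivSub k ↥K rE (fun g : ↥K => rE' (g : H)) ≠ ⊥ ∧
      IsLeast {i | equivSub k H rE' (srepFun rho hdeg i) ≠ ⊥} bE ∧
      Module.finrank k ↥(equivSub k H rE' (srepFun rho hdeg bE)) = 1 ∧
      ∀ (m : ℕ) (rE'' : H → ((Fin m → k) →ₗ[k] (Fin m → k))),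
        IsAction H rE'' → IsIrred k H rE'' →
        equivSub k ↥K rE (fun g : ↥K => rE'' (g : H)) ≠ ⊥ →
        IsLeast {i | equivSub k H rE'' (srepFun rho hdeg i) ≠ ⊥} bE →
        ∃ e : (Fin n → k) ≃ₗ[k] (Fin m → k),
          ∀ g : H, (e.toLinearMap).comp (rE' g) = (rE'' g).comp e.toLinearMap := by
  classical
  have hS : IsAction H (srepFun rho hdeg bE) := srep_isAction hact hdeg bE
  set S : H → (SymPow ι k bE →ₗ[k] SymPow ι k bE) := srepFun rho hdeg bE with hSdef
  set P := equivSub k ↥K rE (fun g : ↥K => S (g : H)) with hPdef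
  have hPne : P ≠ ⊥ := hbE.1
  have huni' : Module.finrank k ↥P = 1 := huni
  obtain ⟨φ, hφP, hφ0⟩ := Submodule.exists_mem_ne_zero_of_ne_bot hPne
  set E₀ := LinearMap.range φ with hE₀def
  set E' := ⨆ g : H, E₀.map (S g) with hE'def
  have hE'inv : ∀ g : H, ∀ x ∈ E', S g x ∈ E' := by
    intro g x hx
    have hle : Submodule.map (S g) E' ≤ E' := by
      rw [hE'def, Submodule.map_iSup]
      refine iSup_le fun g' => ?_
      rw [← Submodule.map_comp, ← hS.2]
      exact le_iSup (fun h => E₀.map (S h)) (g * g')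
    exact hle ⟨x, hx, rfl⟩
  have hE₀le : E₀ ≤ E' := by
    have h := le_iSup (fun h : H => E₀.map (S h)) 1
    rw [hS.1, Submodule.map_id] at h
    exact h
  have hmin : ∀ Q : Submodule k (SymPow ι k bE), E₀ ≤ Q →
      (∀ g, ∀ x ∈ Q, S g x ∈ Q) → E' ≤ Q := by
    intro Q h0 hinv
    refine iSup_le fun g => ?_
    rintro x hx
    obtain ⟨y, hy, rfl⟩ := hx
    exact hinv g y (h0 hy)
  haveI hfd0 : FiniteDimensional k ↥E₀ := LinearMap.finiteDimensional_range φ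
  haveI hfdE' : FiniteDimensional k ↥E' :=
    inferInstanceAs (FiniteDimensional k ↥(⨆ g : H, E₀.map (S g)))
  have hE'ne : E' ≠ ⊥ := by
    intro h
    apply hφ0
    rw [← LinearMap.range_eq_bot, ← hE₀def, ← le_bot_iff]
    exact h ▸ hE₀le
  haveI hE'nt : Nontrivial ↥E' := Submodule.nontrivial_iff_ne_bot.mpr hE'ne
  set n := Module.finrank k ↥E' with hndef
  set e : ↥E' ≃ₗ[k] (Fin n → k) := (Module.finBasis k ↥E').equivFun with hedef
  -- the restricted action on E'
  set SE' : H → (↥E' →ₗ[k] ↥E') :=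
    fun g => (S g).restrict (fun x hx => hE'inv g x hx) with hSE'def
  have hSE'act : IsAction H SE' := by
    constructor
    · apply LinearMap.ext; intro x
      exact Subtype.ext (act_one hS x.1)
    · intro g g'
      apply LinearMap.ext; intro x
      exact Subtype.ext (act_mul hS g g' x.1)
  have hSE'val : ∀ g (y : ↥E'), ((SE' g y : ↥E') : SymPow ι k bE) = S g y.1 := fun g y => rfl
  -- the transported action on Fin n → k
  set rE' : H → ((Fin n → k) →ₗ[k] (Fin n → k)) :=
    fun g => e.toLinearMap ∘ₗ (SE' g) ∘ₗ e.symm.toLinearMap with hrE'def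
  have hrE'apply : ∀ g x, rE' g x = e (SE' g (e.symm x)) := fun g x => rfl
  set incl : (Fin n → k) →ₗ[k] SymPow ι k bE :=
    E'.subtype ∘ₗ e.symm.toLinearMap with hincldef
  have hincl_apply : ∀ x, incl x = ((e.symm x : ↥E') : SymPow ι k bE) := fun x => rfl
  have hincl_equiv : ∀ g, incl.comp (rE' g) = (S g).comp incl := by
    intro g
    apply LinearMap.ext; intro x
    simp only [LinearMap.comp_apply, hincl_apply, hrE'apply]
    rw [e.symm_apply_apply]
    rfl
  have hincl_inj : Function.Injective incl := by
    intro a b hab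
    exact e.symm.injective (Subtype.ext hab)
  have hincl_range : LinearMap.range incl = E' := by
    rw [hincldef, LinearMap.range_comp, LinearEquiv.range, Submodule.map_top,
      Submodule.range_subtype]
  have hrE'act : IsAction H rE' := by
    constructor
    · apply LinearMap.ext; intro x
      rw [hrE'apply, act_one hSE'act, e.apply_symm_apply]
      rfl
    · intro g g'
      apply LinearMap.ext; intro x
      simp only [LinearMap.comp_apply, hrE'apply]
      rw [act_mul hSE'act, e.symm_apply_apply]
  -- K-equivariant maps into S^bE composed with an H-equivariant endo stay K-equivariant
  have hKequiv : ∀ {π : SymPow ι k bE →ₗ[k] SymPow ι k bE},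
      (∀ g : H, π.comp (S g) = (S g).comp π) → π.comp φ ∈ P := by
    intro π hπ g
    apply LinearMap.ext; intro x
    have h1 := equivSub_apply hφP g x
    have h2 := LinearMap.congr_fun (hπ (g : H)) (φ x)
    simp only [LinearMap.comp_apply] at h1 h2 ⊢
    rw [h1, h2]
  -- central claim: the only invariant subspaces of E' are ⊥ and E'
  have key : ∀ Wp : Submodule k (SymPow ι k bE), (∀ g, ∀ x ∈ Wp, S g x ∈ Wp) → Wp ≤ E' →
      Wp = ⊥ ∨ Wp = E' := by
    intro Wp hWinv hWle
    by_cases hW : Wp = ⊥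
    · exact Or.inl hW
    right
    obtain ⟨π, hπW, hπfix, hπeq⟩ := maschke_proj hS Wp hWinv
    have hmemP : π.comp φ ∈ P := hKequiv hπeq
    obtain ⟨c, hc⟩ := exists_smul_of_finrank_one huni' hφP hφ0 hmemP
    have hc0 : c ≠ 0 := by
      rintro rfl
      rw [zero_smul] at hc
      have hkerinv : ∀ g, ∀ x ∈ LinearMap.ker π, S g x ∈ LinearMap.ker π := by
        intro g x hx
        rw [LinearMap.mem_ker] at hx ⊢
        have h := LinearMap.congr_fun (hπeq g) x
        simp only [LinearMap.comp_apply] at h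
        rw [h, hx, map_zero]
      have hE₀ker : E₀ ≤ LinearMap.ker π := by
        rintro x ⟨y, rfl⟩
        rw [LinearMap.mem_ker]
        exact LinearMap.congr_fun hc y
      have hE'ker : E' ≤ LinearMap.ker π := hmin _ hE₀ker hkerinv
      apply hW
      rw [eq_bot_iff]
      intro x hx
      have h1 : π x = x := hπfix x hx
      have h2 : π x = 0 := hE'ker (hWle hx)
      rw [Submodule.mem_bot, ← h1, h2]
    have hccφ : (c * c) • φ = c • φ := by
      have h2 : π.comp (π.comp φ) = π.comp φ := by
        apply LinearMap.ext; intro x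
        exact hπfix _ (hπW _)
      rw [hc, LinearMap.comp_smul, hc, smul_smul] at h2
      exact h2
    have hc1 : c = 1 := by
      have hcc : c * c = c := by
        have h0 : (c * c - c) • φ = 0 := by rw [sub_smul, hccφ, sub_self]
        rcases smul_eq_zero.mp h0 with h | h
        · exact sub_eq_zero.mp h
        · exact absurd h hφ0
      have : c * c = c * 1 := by rw [mul_one, hcc]
      exact mul_left_cancel₀ hc0 this
    have hE₀W : E₀ ≤ Wp := by
      rintro x ⟨y, rfl⟩
      have h : π (φ y) = φ y := by
        have h' := LinearMap.congr_fun hc y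
        simp only [LinearMap.comp_apply, LinearMap.smul_apply] at h'
        rw [hc1, one_smul] at h'
        exact h'
      rw [← h]
      exact hπW _
    exact le_antisymm hWle (hmin _ hE₀W hWinv)
  -- irreducibility of rE'
  have hirrE' : IsIrred k H rE' := by
    constructor
    · exact e.symm.toEquiv.nontrivial
    · intro p hp
      have hWinv : ∀ g, ∀ x ∈ p.map incl, S g x ∈ p.map incl := by
        rintro g _ ⟨y, hy, rfl⟩
        refine ⟨rE' g y, hp g y hy, ?_⟩
        simpa using LinearMap.congr_fun (hincl_equiv g) y
      have hWle : p.map incl ≤ E' := by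
        rintro _ ⟨y, hy, rfl⟩
        rw [← hincl_range]
        exact ⟨y, rfl⟩
      rcases key _ hWinv hWle with h | h
      · left
        apply Submodule.map_injective_of_injective hincl_inj
        rw [h, Submodule.map_bot]
      · right
        apply Submodule.map_injective_of_injective hincl_inj
        rw [h, Submodule.map_top, hincl_range]
  -- the K-map E → (Fin n → k)
  set φ' : E →ₗ[k] ↥E' := LinearMap.codRestrict E' φ (fun x => hE₀le ⟨x, rfl⟩) with hφ'def
  have hφ'val : ∀ x, ((φ' x : ↥E') : SymPow ι k bE) = φ x := fun x => rfl
  set ee : E →ₗ[k] (Fin n → k) := e.toLinearMap ∘ₗ φ' with heedef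
  have hee_apply : ∀ x, ee x = e (φ' x) := fun x => rfl
  have hincl_ee : ∀ x, incl (ee x) = φ x := by
    intro x
    rw [hee_apply, hincl_apply, e.symm_apply_apply, hφ'val]
  have hee0 : ee ≠ 0 := by
    obtain ⟨x, hx⟩ := DFunLike.ne_iff.mp hφ0
    simp only [LinearMap.zero_apply] at hx
    intro h
    apply hx
    rw [← hincl_ee x, h, LinearMap.zero_apply, map_zero]
  have hee_equiv : ∀ g : ↥K, ee.comp (rE g) = (rE' (g : H)).comp ee := by
    intro g
    apply LinearMap.ext; intro x
    simp only [LinearMap.comp_apply, hee_apply, hrE'apply]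
    rw [e.symm_apply_apply]
    congr 1
    apply Subtype.ext
    rw [hφ'val, hSE'val, hφ'val]
    exact equivSub_apply hφP g x
  have hhomK : equivSub k ↥K rE (fun g : ↥K => rE' (g : H)) ≠ ⊥ :=
    (Submodule.ne_bot_iff _).mpr ⟨ee, hee_equiv, hee0⟩
  have hincl0 : incl ≠ 0 := by
    obtain ⟨x, hx⟩ := DFunLike.ne_iff.mp hφ0
    simp only [LinearMap.zero_apply] at hx
    intro h
    apply hx
    rw [← hincl_ee x, h, LinearMap.zero_apply]
  have hmem_bE : equivSub k H rE' (srepFun rho hdeg bE) ≠ ⊥ :=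
    (Submodule.ne_bot_iff _).mpr ⟨incl, hincl_equiv, hincl0⟩
  have hlb : ∀ i, equivSub k H rE' (srepFun rho hdeg i) ≠ ⊥ → bE ≤ i := by
    intro i hi
    obtain ⟨f, hfmem, hf0⟩ := Submodule.exists_mem_ne_zero_of_ne_bot hi
    have hfinj : Function.Injective f := equivariant_injective hirrE' hfmem hf0
    refine hbE.2 ?_
    refine (Submodule.ne_bot_iff _).mpr ⟨f.comp ee, ?_, ?_⟩
    · intro g
      apply LinearMap.ext; intro x
      have h1 := LinearMap.congr_fun (hee_equiv g) x
      have h2 := LinearMap.congr_fun (hfmem ((g : H))) (ee x)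
      simp only [LinearMap.comp_apply] at h1 h2 ⊢
      rw [h1, h2]
    · intro h
      apply hee0
      apply LinearMap.ext; intro x
      have h1 : f (ee x) = 0 := by
        have := LinearMap.congr_fun h x
        simpa using this
      have h2 : f (ee x) = f 0 := by rw [h1, map_zero]
      simpa using hfinj h2
  have hfr : Module.finrank k ↥(equivSub k H rE' (srepFun rho hdeg bE)) = 1 := by
    refine finrank_one_of_spans (v := incl) hincl_equiv hincl0 ?_
    intro f hf
    have hfee : f.comp ee ∈ P := by
      intro g
      apply LinearMap.ext; intro x
      have h1 := LinearMap.congr_fun (hee_equiv g) x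
      have h2 := LinearMap.congr_fun (hf ((g : H))) (ee x)
      simp only [LinearMap.comp_apply] at h1 h2 ⊢
      rw [h1, h2]
    obtain ⟨c, hc⟩ := exists_smul_of_finrank_one huni' hφP hφ0 hfee
    refine ⟨c, ?_⟩
    by_contra hne
    have hmem : f - c • incl ∈ equivSub k H rE' (srepFun rho hdeg bE) :=
      Submodule.sub_mem _ hf (Submodule.smul_mem _ _ hincl_equiv)
    have hh0 : f - c • incl ≠ 0 := sub_ne_zero.mpr hne
    have hinj : Function.Injective (f - c • incl) := equivariant_injective hirrE' hmem hh0
    obtain ⟨x, hx⟩ := DFunLike.ne_iff.mp hee0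
    simp only [LinearMap.zero_apply] at hx
    apply hx
    have h1 : f (ee x) = c • φ x := by
      have := LinearMap.congr_fun hc x
      simpa using this
    have h2 : (f - c • incl) (ee x) = 0 := by
      simp only [LinearMap.sub_apply, LinearMap.smul_apply, h1, hincl_ee x, sub_self]
    have h3 : (f - c • incl) (ee x) = (f - c • incl) 0 := by rw [h2, map_zero]
    simpa using hinj h3
  refine ⟨n, rE', hrE'act, hirrE', hhomK, ⟨hmem_bE, fun i hi => hlb i hi⟩, hfr, ?_⟩
  -- uniqueness
  intro m rE'' hact'' hirr'' hhomK'' hleast''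
  obtain ⟨ψ, hψmem, hψ0⟩ := Submodule.exists_mem_ne_zero_of_ne_bot hhomK''
  obtain ⟨f, hfmem, hf0⟩ := Submodule.exists_mem_ne_zero_of_ne_bot hleast''.1
  have hfinj : Function.Injective f := equivariant_injective hirr'' hfmem hf0
  have hfψmem : f.comp ψ ∈ P := by
    intro g
    apply LinearMap.ext; intro x
    have h1 := equivSub_apply hψmem g x
    have h2 := LinearMap.congr_fun (hfmem ((g : H))) (ψ x)
    simp only [LinearMap.comp_apply] at h1 h2 ⊢
    rw [h1, h2]
  have hfψ0 : f.comp ψ ≠ 0 := by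
    intro h
    apply hψ0
    apply LinearMap.ext; intro x
    have h1 : f (ψ x) = 0 := by
      have := LinearMap.congr_fun h x
      simpa using this
    have h2 : f (ψ x) = f 0 := by rw [h1, map_zero]
    simpa using hfinj h2
  obtain ⟨c, hc⟩ := exists_smul_of_finrank_one huni' hφP hφ0 hfψmem
  have hc0 : c ≠ 0 := by
    rintro rfl
    rw [zero_smul] at hc
    exact hfψ0 hc
  have hfψ : ∀ x, f (ψ x) = c • φ x := by
    intro x
    have := LinearMap.congr_fun hc x
    simpa using this
  have hrange_inv : ∀ g, ∀ x ∈ LinearMap.range f, S g x ∈ LinearMap.range f := by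
    rintro g _ ⟨y, rfl⟩
    refine ⟨rE'' g y, ?_⟩
    have := LinearMap.congr_fun (hfmem g) y
    simpa using this
  have hE₀range : E₀ ≤ LinearMap.range f := by
    rintro _ ⟨y, rfl⟩
    refine ⟨c⁻¹ • ψ y, ?_⟩
    rw [map_smul, hfψ, smul_smul, inv_mul_cancel₀ hc0, one_smul]
  have hE'range : E' ≤ LinearMap.range f := hmin _ hE₀range hrange_inv
  have hQinv : ∀ g, ∀ x ∈ E'.comap f, rE'' g x ∈ E'.comap f := by
    intro g x hx
    rw [Submodule.mem_comap] at hx ⊢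
    have h1 : f (rE'' g x) = S g (f x) := by
      have := LinearMap.congr_fun (hfmem g) x
      simpa using this
    rw [h1]
    exact hE'inv g _ hx
  have hQne : E'.comap f ≠ ⊥ := by
    obtain ⟨x, hx⟩ := DFunLike.ne_iff.mp hψ0
    simp only [LinearMap.zero_apply] at hx
    intro h
    apply hx
    have hmem : ψ x ∈ E'.comap f := by
      rw [Submodule.mem_comap, hfψ]
      exact Submodule.smul_mem _ _ (hE₀le ⟨x, rfl⟩)
    rw [h, Submodule.mem_bot] at hmem
    exact hmem
  have hQtop : E'.comap f = ⊤ := ((hirr''.2 _ hQinv).resolve_left hQne)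
  have hrange_le : LinearMap.range f ≤ E' := by
    rintro _ ⟨y, rfl⟩
    have : y ∈ E'.comap f := hQtop ▸ Submodule.mem_top
    exact this
  set g0 : (Fin m → k) →ₗ[k] ↥E' :=
    LinearMap.codRestrict E' f (fun x => hrange_le ⟨x, rfl⟩) with hg0def
  have hg0val : ∀ x, ((g0 x : ↥E') : SymPow ι k bE) = f x := fun x => rfl
  have hg0bij : Function.Bijective g0 := by
    constructor
    · intro a b hab
      exact hfinj (congrArg Subtype.val hab)
    · rintro ⟨x, hx⟩
      obtain ⟨y, hy⟩ := hE'range hx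
      exact ⟨y, Subtype.ext hy⟩
  set eq'' := LinearEquiv.ofBijective g0 hg0bij with heq''def
  refine ⟨e.symm.trans eq''.symm, ?_⟩
  intro g
  apply LinearMap.ext; intro x
  simp only [LinearMap.comp_apply, LinearEquiv.coe_coe, LinearEquiv.trans_apply]
  rw [hrE'apply, e.symm_apply_apply]
  apply eq''.injective
  rw [eq''.apply_symm_apply]
  apply Subtype.ext
  have h1 : f (rE'' g (eq''.symm (e.symm x))) = S g (f (eq''.symm (e.symm x))) := by
    have := LinearMap.congr_fun (hfmem g) (eq''.symm (e.symm x))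
    simpa using this
  have h2 : f (eq''.symm (e.symm x)) = ((e.symm x : ↥E') : SymPow ι k bE) := by
    have h := eq''.apply_symm_apply (e.symm x)
    exact congrArg Subtype.val h
  calc ((SE' g (e.symm x) : ↥E') : SymPow ι k bE)
      = S g ((e.symm x : ↥E') : SymPow ι k bE) := hSE'val g _
    _ = f (rE'' g (eq''.symm (e.symm x))) := by rw [h1, h2]
    _ = ((eq'' (rE'' g (eq''.symm (e.symm x))) : ↥E') : SymPow ι k bE) := by
        rw [heq''def]
        rfl
end
end
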